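/- Let E be a real normed vector space, C ⊆ E a nonempty compact convex set, f : E → ℝ, Δ : E → E → ℝ, and C_f ≥ 0 a constant such that Δ satisfies the curvature bound C_f for f on C. Assume that for every x ∈ C the piecewise linearization at x is convex on C. Let x* ∈ C be a minimizer of f over C, let ε ≥ 0, and consider the agnostic schedule α_t = 2/(t+2). Let x, v : ℕ → E satisfy: x_0 ∈ C; for every t, v_t ∈ C is an ε-approximate model minimizer at x_t with step-size α_t; and x_{t+1} = (1 − α_t)·x_t + α_t·v_t. Then for every t ∈ ℕ, f(x_{t+1}) − f(x*) ≤ (1/2)·C_f + 2·C_f·(1 + 2ε)/(t + 2). -/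

import Mathlib

/-- Primal-dual convergence for the piecewise linear model: if only the piecewise
linearizations of `f` are convex on `C`, the relaxed ASFW iterates with agnostic
schedule `α t = 2/(t+2)` satisfy
`f (x (t+1)) - f xs ≤ (1/2) * Cf + 2 * Cf * (1 + 2ε) / (t + 2)`. -/
theorem pw_linear_asfw_primal_dual_convergence
    {E : Type*} [NormedAddCommGroup E] [NormedSpace ℝ E]
    (C : Set E) (hCne : C.Nonempty) (hCcomp : IsCompact C) (hCconv : Convex ℝ C)
    (f : E → ℝ)
    (Δ : E → E → ℝ) (Cf : ℝ) (hCf : 0 ≤ Cf)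
    (hcurv : ∀ x ∈ C, ∀ v ∈ C, ∀ α ∈ Set.Ioc (0:ℝ) 1,
      |f (x + α • (v - x)) - f x - Δ x (α • (v - x))| ≤ α ^ 2 / 2 * Cf)
    (hPLconv : ∀ x ∈ C, ConvexOn ℝ C (fun y => Δ x (y - x)) ∧ Δ x 0 = 0)
    (xs : E) (hxs : xs ∈ C) (hmin : ∀ y ∈ C, f xs ≤ f y)
    (ε : ℝ) (hε : 0 ≤ ε)
    (α : ℕ → ℝ) (hα : ∀ t : ℕ, α t = 2 / ((t : ℝ) + 2))
    (x v : ℕ → E) (hx0 : x 0 ∈ C) (hv : ∀ t, v t ∈ C)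
    (horacle : ∀ t : ℕ, ∀ w ∈ C,
      Δ (x t) (α t • (v t - x t)) ≤ Δ (x t) (α t • (w - x t)) + ε * (α t) ^ 2 / 2 * Cf)
    (hstep : ∀ t : ℕ, x (t + 1) = (1 - α t) • x t + α t • v t) :
    ∀ t : ℕ, f (x (t + 1)) - f xs ≤
      1 / 2 * Cf + 2 * Cf * (1 + 2 * ε) / ((t : ℝ) + 2) := by
  -- schedule facts
  have hαt : ∀ t : ℕ, α t ∈ Set.Ioc (0:ℝ) 1 := by
    intro t
    have ht : (0:ℝ) ≤ (t:ℝ) := Nat.cast_nonneg t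
    constructor
    · rw [hα]; positivity
    · rw [hα, div_le_one (by linarith)]; linarith
  -- iterates stay in C
  have hxC : ∀ t, x t ∈ C := by
    intro t
    induction t with
    | zero => exact hx0
    | succ n ih =>
      rw [hstep n]
      exact hCconv ih (hv n) (by linarith [(hαt n).2]) (le_of_lt (hαt n).1) (by ring)
  -- per-step descent inequality
  have key : ∀ t, f (x (t+1)) - f xs ≤
      (1 - α t) * (f (x t) - f xs) + α t * (Cf/2) + (1+ε) * (α t)^2 / 2 * Cf := by
    intro t
    have hαm := hαt t
    have hα0 : (0:ℝ) ≤ α t := le_of_lt hαm.1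
    have h1 := hcurv (x t) (hxC t) (v t) (hv t) (α t) hαm
    have h2 := horacle t xs hxs
    have h3 := hcurv (x t) (hxC t) xs hxs 1 (by constructor <;> norm_num)
    obtain ⟨hconv, hzero⟩ := hPLconv (x t) (hxC t)
    -- x (t+1) = x t + α t • (v t - x t)
    have hx1 : x (t+1) = x t + α t • (v t - x t) := by
      rw [hstep t]; module
    -- convexity of the model
    have h4 : Δ (x t) (α t • (xs - x t)) ≤ α t * Δ (x t) (xs - x t) := by
      have hc := hconv.2 (hxC t) hxs (by linarith [hαm.2] : (0:ℝ) ≤ 1 - α t) hα0 (by ring)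
      have e1 : ((1 - α t) • x t + α t • xs) - x t = α t • (xs - x t) := by module
      have e2 : x t - x t = (0:E) := sub_self _
      simp only [e1, e2, hzero, smul_eq_mul] at hc
      calc Δ (x t) (α t • (xs - x t)) ≤ (1 - α t) * 0 + α t * Δ (x t) (xs - x t) := hc
        _ = α t * Δ (x t) (xs - x t) := by ring
    -- upper bound on Δ (x t) (xs - x t)
    have h5 : Δ (x t) (xs - x t) ≤ f xs - f (x t) + Cf/2 := by
      have e : x t + (1:ℝ) • (xs - x t) = xs := by module
      rw [e] at h3
      have := abs_le.mp h3
      have h31 := this.1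
      norm_num at h31 ⊢
      linarith
    have h6 : α t * Δ (x t) (xs - x t) ≤ α t * (f xs - f (x t) + Cf/2) :=
      mul_le_mul_of_nonneg_left h5 hα0
    -- curvature at the step
    have h7 : f (x (t+1)) - f (x t) - Δ (x t) (α t • (v t - x t)) ≤ (α t)^2 / 2 * Cf := by
      rw [hx1]; exact (abs_le.mp h1).2
    nlinarith [h2, h4, h6, h7]
  -- main induction
  intro t
  induction t with
  | zero =>
    have h := key 0
    have hα0 : α 0 = 1 := by rw [hα]; norm_num
    rw [hα0] at h
    push_cast
    nlinarith [mul_nonneg hCf hε]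
  | succ n ih =>
    have h := key (n+1)
    have hαn : α (n+1) = 2/((n:ℝ)+3) := by rw [hα]; push_cast; ring_nf
    rw [hαn] at h
    set N : ℝ := (n:ℝ) with hN
    have hN0 : (0:ℝ) ≤ N := Nat.cast_nonneg n
    have h2 : (0:ℝ) < N + 2 := by linarith
    have h3 : (0:ℝ) < N + 3 := by linarith
    have hcoef : (0:ℝ) ≤ 1 - 2/(N+3) := by
      rw [sub_nonneg, div_le_one h3]; linarith
    have t1 : (1 - 2/(N+3)) * (f (x (n+1)) - f xs) ≤
        (1 - 2/(N+3)) * (1 / 2 * Cf + 2 * Cf * (1 + 2 * ε) / (N + 2)) :=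
      mul_le_mul_of_nonneg_left ih hcoef
    have harith : (1 - 2/(N+3)) * (1 / 2 * Cf + 2 * Cf * (1 + 2 * ε) / (N + 2))
        + (2/(N+3)) * (Cf/2) + (1+ε) * (2/(N+3))^2 / 2 * Cf
        ≤ 1 / 2 * Cf + 2 * Cf * (1 + 2 * ε) / (N + 3) := by
      field_simp
      nlinarith [mul_nonneg hCf hε, mul_nonneg (mul_nonneg hCf hε) hN0,
        mul_nonneg (mul_nonneg (mul_nonneg hCf hε) hN0) hN0, sq_nonneg N,
        mul_nonneg hCf hN0, mul_nonneg (mul_nonneg hCf hN0) hN0]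
    push_cast
    have : ((n:ℝ) + 1) + 2 = N + 3 := by rw [hN]; ring
    rw [this]
    linarith [h, t1, harith]
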